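/- Let Γ: A = ⊕_{t∈T} A^{(t)} be a grading of an F-algebra A by a set T with finite support, and regard A as an algebra with the generalized F^T-action h·a = h(t)a for a ∈ A^{(t)}. Then for all n ∈ ℕ: c_n^{T-gr}(A) = c_n^{F^T}(A), the n-th graded cocharacter equals the n-th F^T-cocharacter (the FS_n-modules W_n^{T-gr}/(W_n^{T-gr} ∩ Id^{T-gr}(A)) and W_n^{F^T}/(W_n^{F^T} ∩ Id^{F^T}(A)) are isomorphic), and, if char F = 0, ℓ_n^{T-gr}(A) = ℓ_n^{F^T}(A). -/

import Mathlib

open Filter Finset Submodule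

noncomputable section

namespace PIExp

/-- The multiset of leaves (occurrences of generators) of a non-associative word. -/
def mleaves {α : Type} : FreeMagma α → Multiset α
  | .of a => {a}
  | .mul x y => mleaves x + mleaves y

variable (F : Type) [Field F] (S : Type)

/-- The absolutely free non-associative algebra on `X = {x_1, x_2, …}`
with symbols from `S` (the generator `(i, s)` plays the role of `x_i^s`). -/
abbrev FreeNA : Type := FreeNonUnitalNonAssocAlgebra F (ℕ × S)

/-- A non-associative word in the generators, viewed inside the free algebra. -/
def embedMonomial : FreeMagma (ℕ × S) →ₙ* FreeNA F S :=
  FreeMagma.lift (FreeNonUnitalNonAssocAlgebra.of F)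

/-- `Wn F S n` is the space of multilinear elements of degree `n` in `x_0, …, x_{n-1}`:
the span of all words `x_{σ(0)}^{s_0} ⋯ x_{σ(n-1)}^{s_{n-1}}` (all bracket arrangements). -/
def Wn (n : ℕ) : Submodule F (FreeNA F S) :=
  Submodule.span F
    {f | ∃ w : FreeMagma (ℕ × S), (mleaves w).map Prod.fst = Multiset.range n ∧
      f = embedMonomial F S w}

/-- The substitution `x_i ↦ x_{g i}` (with the symbols untouched),
as an algebra endomorphism of the free algebra. -/
def relabelHom (g : ℕ → ℕ) : FreeNA F S →ₙₐ[F] FreeNA F S :=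
  FreeNonUnitalNonAssocAlgebra.lift F
    (fun p : ℕ × S => FreeNonUnitalNonAssocAlgebra.of F (g p.1, p.2))

/-- `relabelHom` as a linear endomorphism. -/
def relabelL (g : ℕ → ℕ) : FreeNA F S →ₗ[F] FreeNA F S where
  toFun := relabelHom F S g
  map_add' := map_add _
  map_smul' := map_smul _

variable {A : Type} [NonUnitalNonAssocSemiring A] [Module F A]
  [SMulCommClass F A A] [IsScalarTower F A A]

variable (A) in
/-- The ideal of polynomial `H`-identities of an algebra `A` with a generalized `H`-action:
all elements of the free algebra vanishing under every substitution `x_i^h ↦ h • ψ i`. -/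
def IdH (H : Type) [Semiring H] [Module H A] : Submodule F (FreeNA F H) :=
  ⨅ ψ : ℕ → A,
    LinearMap.ker ((FreeNonUnitalNonAssocAlgebra.lift F (fun p : ℕ × H => p.2 • ψ p.1) :
      FreeNA F H →ₙₐ[F] A) : FreeNA F H →ₗ[F] A)

variable (A) in
/-- The ideal of graded polynomial identities of a `T`-graded algebra
`A = ⊕_t comp t`: elements vanishing under all graded substitutions `x_i^{(t)} ↦ ψ (i,t) ∈ comp t`. -/
def IdGr (T : Type) (comp : T → Submodule F A) : Submodule F (FreeNA F T) :=
  ⨅ ψ : {ψ : ℕ × T → A // ∀ p, ψ p ∈ comp p.2},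
    LinearMap.ker ((FreeNonUnitalNonAssocAlgebra.lift F (fun p : ℕ × T => ψ.1 p) :
      FreeNA F T →ₙₐ[F] A) : FreeNA F T →ₗ[F] A)

variable (A) in
/-- The ideal of ordinary polynomial identities of `A` (the symbols are trivial). -/
def IdOrd : Submodule F (FreeNA F Unit) :=
  ⨅ ψ : ℕ → A,
    LinearMap.ker ((FreeNonUnitalNonAssocAlgebra.lift F (fun p : ℕ × Unit => ψ p.1) :
      FreeNA F Unit →ₙₐ[F] A) : FreeNA F Unit →ₗ[F] A)

/-- The `n`-th codimension attached to an ideal of identities `I`: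
`dim (W_n / (W_n ∩ I))`, computed as the image of `W_n` in the quotient by `I`. -/
def codim (I : Submodule F (FreeNA F S)) (n : ℕ) : ℕ :=
  Module.finrank F ((Wn F S n).map I.mkQ)

/-- The `n`-th codimension as a cardinal (for possibly infinite-dimensional situations). -/
def codimRank (I : Submodule F (FreeNA F S)) (n : ℕ) : Cardinal :=
  Module.rank F ((Wn F S n).map I.mkQ)

end PIExp
namespace PIExp

/-- The parts of a partition `p ⊢ n`, listed in non-increasing order:
`partFn p 0 = λ_1`, `partFn p 1 = λ_2`, … (`0` beyond the number of parts). -/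
def partFn {n : ℕ} (p : Nat.Partition n) : ℕ → ℕ :=
  fun i => ((p.parts.sort (· ≤ ·)).reverse).getD i 0

/-- The cell (row, column) of the `k`-th box (0-indexed) in the canonical
row-by-row filling of the Young diagram with row lengths `lam`. -/
def cellOf (lam : ℕ → ℕ) : ℕ → ℕ × ℕ
  | 0 => (0, 0)
  | k + 1 =>
      let c := cellOf lam k
      if c.2 + 1 < lam c.1 then (c.1, c.2 + 1) else (c.1 + 1, 0)

/-- The canonical Young tableau of shape `p`: the cell of each of the numbers `0, …, n-1`. -/
def canonT {n : ℕ} (p : Nat.Partition n) : Fin n → ℕ × ℕ :=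
  fun m => cellOf (partFn p) (m : ℕ)

/-- A permutation of `Fin n` viewed as a map `ℕ → ℕ`. -/
def permNat {n : ℕ} (σ : Equiv.Perm (Fin n)) : ℕ → ℕ :=
  fun i => if h : i < n then (σ ⟨i, h⟩ : ℕ) else i

/-- The row stabilizer `R_{T}` of a tableau `T` (given by the cell of each number). -/
def rowStab {n : ℕ} (Tb : Fin n → ℕ × ℕ) : Finset (Equiv.Perm (Fin n)) :=
  Finset.univ.filter fun π => ∀ m, (Tb (π m)).1 = (Tb m).1

/-- The column stabilizer `C_{T}` of a tableau `T`. -/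
def colStab {n : ℕ} (Tb : Fin n → ℕ × ℕ) : Finset (Equiv.Perm (Fin n)) :=
  Finset.univ.filter fun π => ∀ m, (Tb (π m)).2 = (Tb m).2

variable (F : Type) [Field F] (S : Type)

/-- The Young symmetrizer `e_T = a_T b_T = Σ_{π ∈ R_T} Σ_{σ ∈ C_T} (sign σ) πσ`, acting on the
free algebra by permutation of the variables. -/
def youngE {n : ℕ} (Tb : Fin n → ℕ × ℕ) : FreeNA F S →ₗ[F] FreeNA F S :=
  ∑ π ∈ rowStab Tb, ∑ σ ∈ colStab Tb,
    ((Equiv.Perm.sign σ : ℤ) : F) • relabelL F S (permNat (π * σ))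

/-- The Young symmetrizer `e*_T = b_T a_T = Σ_{σ ∈ C_T} Σ_{π ∈ R_T} (sign σ) σπ`. -/
def youngEStar {n : ℕ} (Tb : Fin n → ℕ × ℕ) : FreeNA F S →ₗ[F] FreeNA F S :=
  ∑ σ ∈ colStab Tb, ∑ π ∈ rowStab Tb,
    ((Equiv.Perm.sign σ : ℤ) : F) • relabelL F S (permNat (σ * π))

/-- The multiplicity `m(A, H, λ)` of the irreducible `S_n`-character `χ(λ)` in the `n`-th
cocharacter attached to the ideal of identities `I`; it equals
`dim e_{T_λ}·(W_n/(W_n ∩ I))`, computed here via the canonical tableau of shape `λ`. -/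
def mult (I : Submodule F (FreeNA F S)) {n : ℕ} (p : Nat.Partition n) : ℕ :=
  Module.finrank F (((Wn F S n).map (youngE F S (canonT p))).map I.mkQ)

/-- The `n`-th colength `ℓ_n = Σ_{λ ⊢ n} m(A, H, λ)` attached to an ideal of identities `I`. -/
def colength (I : Submodule F (FreeNA F S)) (n : ℕ) : ℕ :=
  ∑ p : Nat.Partition n, mult F S I p

/-- The function `Φ(x_1, …, x_s) = 1 / (x_1^{x_1} ⋯ x_s^{x_s})` (with `0^0 = 1`). -/
def Phi (s : ℕ) (x : Fin s → ℝ) : ℝ :=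
  (∏ i, Real.rpow (x i) (x i))⁻¹

/-- `max { Φ(λ_1/n, …, λ_s/n) : λ ⊢ n, m(A,H,λ) ≠ 0 }`. -/
def maxPhi (s : ℕ) (I : Submodule F (FreeNA F S)) (n : ℕ) : ℝ :=
  sSup {r : ℝ | ∃ p : Nat.Partition n, mult F S I p ≠ 0 ∧
    r = Phi s (fun i => (partFn p (i : ℕ) : ℝ) / (n : ℝ))}

/-- `d(A) = limsup_n max { Φ(λ_1/n, …, λ_s/n) : λ ⊢ n, m(A,H,λ) ≠ 0 }`. -/
def dVal (s : ℕ) (I : Submodule F (FreeNA F S)) : ℝ :=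
  Filter.limsup (fun n : ℕ => maxPhi F S s I n) Filter.atTop

end PIExp
namespace PIExp

/-- `A` is an algebra with a generalized `H`-action: for every `h ∈ H` there exist
`h'_i, h''_i, h'''_i, h''''_i ∈ H` with
`h(ab) = Σ_i ((h'_i a)(h''_i b) + (h'''_i b)(h''''_i a))` for all `a, b ∈ A`. -/
def IsGenAction (H A : Type) [Semiring H] [NonUnitalNonAssocSemiring A] [Module H A] : Prop :=
  ∀ h : H, ∃ (k : ℕ) (h₁ h₂ h₃ h₄ : Fin k → H), ∀ a b : A,
    h • (a * b) = ∑ i : Fin k, ((h₁ i • a) * (h₂ i • b) + (h₃ i • b) * (h₄ i • a))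

/-- `A` is `H`-simple: `A² ≠ 0` and `A` has no `H`-invariant two-sided ideals
other than `0` and `A`. -/
def IsHSimple (F H A : Type) [Field F] [Semiring H] [NonUnitalNonAssocSemiring A]
    [Module F A] [Module H A] : Prop :=
  (∃ a b : A, a * b ≠ 0) ∧
    ∀ I : Submodule F A,
      (∀ a : A, ∀ x ∈ I, a * x ∈ I) → (∀ a : A, ∀ x ∈ I, x * a ∈ I) →
      (∀ h : H, ∀ x ∈ I, h • x ∈ I) → I = ⊥ ∨ I = ⊤

/-- `comp : T → Submodule F A` is a grading of `A` by the set `T`: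
`A = ⊕_{t ∈ T} A^{(t)}` and for all `s, t` there is `r` with `A^{(s)} A^{(t)} ⊆ A^{(r)}`. -/
def IsGrading (F T A : Type) [Field F] [NonUnitalNonAssocSemiring A] [Module F A]
    (comp : T → Submodule F A) : Prop :=
  iSupIndep comp ∧ (⨆ t, comp t) = ⊤ ∧
    ∀ s t : T, ∃ r : T, ∀ a ∈ comp s, ∀ b ∈ comp t, a * b ∈ comp r

/-- A graded algebra is graded-simple: `A² ≠ 0` and the only graded two-sided ideals
are `0` and `A`. -/
def IsGradedSimple (F T A : Type) [Field F] [NonUnitalNonAssocSemiring A] [Module F A]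
    (comp : T → Submodule F A) : Prop :=
  (∃ a b : A, a * b ≠ 0) ∧
    ∀ I : Submodule F A,
      (∀ a : A, ∀ x ∈ I, a * x ∈ I) → (∀ a : A, ∀ x ∈ I, x * a ∈ I) →
      (I = ⨆ t, I ⊓ comp t) → I = ⊥ ∨ I = ⊤

end PIExp

namespace PIExp

open FreeNonUnitalNonAssocAlgebra

section Aux

lemma mleaves_mul {α : Type} (x y : FreeMagma α) :
    mleaves (x * y) = mleaves x + mleaves y := rfl

lemma mleaves_map {α β : Type} (f : α → β) : ∀ w : FreeMagma α,
    mleaves (FreeMagma.map f w) = (mleaves w).map f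
  | .of a => rfl
  | .mul x y => by
      rw [FreeMagma.mul_eq, map_mul, mleaves_mul, mleaves_mul, mleaves_map f x,
        mleaves_map f y, Multiset.map_add]

variable {F : Type} [Field F] {S : Type}

lemma embed_of (a : ℕ × S) : embedMonomial F S (.of a) = of F a := rfl

lemma mul_mem_of_span {M : Type} [NonUnitalNonAssocSemiring M] [Module F M]
    [SMulCommClass F M M] [IsScalarTower F M M] {s t : Set M} {p : Submodule F M}
    (h : ∀ a ∈ s, ∀ b ∈ t, a * b ∈ p) {x y : M}
    (hx : x ∈ Submodule.span F s) (hy : y ∈ Submodule.span F t) : x * y ∈ p := by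
  induction hx using Submodule.span_induction with
  | mem a ha =>
    induction hy using Submodule.span_induction with
    | mem b hb => exact h a ha b hb
    | zero => rw [mul_zero]; exact p.zero_mem
    | add u v _ _ hu hv => rw [mul_add]; exact p.add_mem hu hv
    | smul c u _ hu => rw [mul_smul_comm]; exact p.smul_mem c hu
  | zero => rw [zero_mul]; exact p.zero_mem
  | add u v _ _ hu hv => rw [add_mul]; exact p.add_mem hu hv
  | smul c u _ hu => rw [smul_mul_assoc]; exact p.smul_mem c hu

variable (F)

/-- The comparison homomorphism `x_i^h ↦ ∑_{t ∈ s} h(t) x_i^{(t)}`. -/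
def xiHom (T : Type) (s : Finset T) : FreeNA F (T → F) →ₙₐ[F] FreeNA F T :=
  lift F fun p : ℕ × (T → F) => ∑ t ∈ s, p.2 t • of F (p.1, t)

def xiL (T : Type) (s : Finset T) : FreeNA F (T → F) →ₗ[F] FreeNA F T where
  toFun := xiHom F T s
  map_add' := map_add _
  map_smul' := map_smul _

variable {T : Type} {s : Finset T}

lemma xiL_apply (x : FreeNA F (T → F)) : xiL F T s x = xiHom F T s x := rfl

lemma relabelL_apply (g : ℕ → ℕ) (x : FreeNA F S) :
    relabelL F S g x = relabelHom F S g x := rfl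

lemma xiHom_of (i : ℕ) (h : T → F) :
    xiHom F T s (of F (i, h)) = ∑ t ∈ s, h t • of F (i, t) :=
  lift_of_apply F _ (i, h)

variable {F}

lemma relabel_comm_xi (g : ℕ → ℕ) :
    (relabelHom F T g).comp (xiHom F T s) = (xiHom F T s).comp (relabelHom F (T → F) g) := by
  apply hom_ext
  rintro ⟨i, h⟩
  simp [relabelHom, xiHom, NonUnitalAlgHom.comp_apply, map_sum]

lemma relabelL_comm_xiL (g : ℕ → ℕ) :
    relabelL F T g ∘ₗ xiL F T s = xiL F T s ∘ₗ relabelL F (T → F) g :=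
  LinearMap.ext fun x => DFunLike.congr_fun (relabel_comm_xi g) x

lemma youngE_comm_xiL {n : ℕ} (Tb : Fin n → ℕ × ℕ) (x : FreeNA F (T → F)) :
    youngE F T Tb (xiL F T s x) = xiL F T s (youngE F (T → F) Tb x) := by
  simp only [youngE, LinearMap.sum_apply, LinearMap.smul_apply, map_sum, map_smul]
  refine Finset.sum_congr rfl fun π _ => Finset.sum_congr rfl fun σ _ => ?_
  congr 1
  exact DFunLike.congr_fun (relabelL_comm_xiL (permNat (π * σ))) x

/-- `ξ` maps the span of words with a given multiset of indices into the
corresponding span. -/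
lemma xi_embed_mem : ∀ w : FreeMagma (ℕ × (T → F)),
    xiL F T s (embedMonomial F (T → F) w) ∈ Submodule.span F
      {f | ∃ w' : FreeMagma (ℕ × T),
        (mleaves w').map Prod.fst = (mleaves w).map Prod.fst ∧ f = embedMonomial F T w'}
  | .of a => by
      rw [embed_of, xiL_apply, xiHom_of]
      refine Submodule.sum_mem _ fun t _ => Submodule.smul_mem _ _ (Submodule.subset_span ?_)
      exact ⟨.of (a.1, t), rfl, rfl⟩
  | .mul x y => by
      rw [FreeMagma.mul_eq, map_mul, xiL_apply, map_mul]
      refine mul_mem_of_span ?_ (xi_embed_mem x) (xi_embed_mem y)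
      rintro a ⟨wx, hwx, rfl⟩ b ⟨wy, hwy, rfl⟩
      refine Submodule.subset_span ⟨wx * wy, ?_, (map_mul _ _ _).symm⟩
      rw [mleaves_mul, mleaves_mul, Multiset.map_add, Multiset.map_add, hwx, hwy]

lemma map_xiL_Wn_le (n : ℕ) : (Wn F (T → F) n).map (xiL F T s) ≤ Wn F T n := by
  rw [Wn, Submodule.map_span, Submodule.span_le]
  rintro _ ⟨f, ⟨w, hw, rfl⟩, rfl⟩
  have := xi_embed_mem (s := s) w
  rw [hw] at this
  exact this

end Aux

end PIExp

namespace PIExp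

open FreeNonUnitalNonAssocAlgebra

section Aux2

variable {F : Type} [Field F] {T : Type} {s : Finset T}
variable {A : Type} [NonUnitalNonAssocRing A] [Module F A]
  [SMulCommClass F A A] [IsScalarTower F A A] [Module (T → F) A]
variable {comp : T → Submodule F A}

lemma mem_IdGr {x : FreeNA F T} :
    x ∈ IdGr F A T comp ↔ ∀ ψ : {ψ : ℕ × T → A // ∀ p, ψ p ∈ comp p.2},
      (lift F (fun p : ℕ × T => ψ.1 p) : FreeNA F T →ₙₐ[F] A) x = 0 := by
  simp [IdGr, Submodule.mem_iInf, LinearMap.mem_ker]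

lemma mem_IdH {x : FreeNA F (T → F)} :
    x ∈ IdH F A (T → F) ↔ ∀ ψ : ℕ → A,
      (lift F (fun p : ℕ × (T → F) => p.2 • ψ p.1) : FreeNA F (T → F) →ₙₐ[F] A) x = 0 := by
  simp [IdH, Submodule.mem_iInf, LinearMap.mem_ker]

lemma eval_comp_xi (hact : ∀ (h : T → F) (t : T), ∀ a ∈ comp t, h • a = h t • a)
    (ψ' : ℕ × T → A) (hψ' : ∀ p, ψ' p ∈ comp p.2) :
    (lift F (fun p : ℕ × T => ψ' p) : FreeNA F T →ₙₐ[F] A).comp (xiHom F T s)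
      = lift F (fun p : ℕ × (T → F) => p.2 • (∑ t ∈ s, ψ' (p.1, t))) := by
  apply hom_ext
  rintro ⟨i, h⟩
  rw [NonUnitalAlgHom.comp_apply, xiHom_of, map_sum, lift_of_apply, Finset.smul_sum]
  refine Finset.sum_congr rfl fun t _ => ?_
  rw [map_smul, lift_of_apply, hact h t _ (hψ' (i, t))]

lemma exists_decomp (htotal : (⨆ t, comp t) = ⊤) (hs : ∀ t, t ∉ s → comp t = ⊥) (a : A) :
    ∃ c : T → A, (∀ t, c t ∈ comp t) ∧ ∑ t ∈ s, c t = a := by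
  have ha : a ∈ ⨆ t, comp t := htotal ▸ Submodule.mem_top
  rw [Submodule.mem_iSup_iff_exists_finsupp] at ha
  obtain ⟨f, hf, hsum⟩ := ha
  refine ⟨f, hf, ?_⟩
  rw [← hsum]
  refine (Finsupp.sum_of_support_subset f ?_ (fun _ v => v) fun _ _ => rfl).symm
  intro t ht
  by_contra hts
  have := hf t
  rw [hs t hts, Submodule.mem_bot] at this
  exact Finsupp.mem_support_iff.mp ht this

set_option maxHeartbeats 1000000 in
lemma IdH_eq_comap (hact : ∀ (h : T → F) (t : T), ∀ a ∈ comp t, h • a = h t • a)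
    (htotal : (⨆ t, comp t) = ⊤) (hs : ∀ t, t ∉ s → comp t = ⊥) :
    IdH F A (T → F) = (IdGr F A T comp).comap (xiL F T s) := by
  ext x
  rw [Submodule.mem_comap, mem_IdH, mem_IdGr]
  constructor
  · intro hx ψ
    have := DFunLike.congr_fun (eval_comp_xi (s := s) hact ψ.1 ψ.2) x
    rw [NonUnitalAlgHom.comp_apply] at this
    rw [xiL_apply, this]
    exact hx (fun i => ∑ t ∈ s, ψ.1 (i, t))
  · intro hx ψ
    choose c hc hcsum using fun i => exists_decomp htotal hs (ψ i)
    have hψ' : ∀ p : ℕ × T, c p.1 p.2 ∈ comp p.2 := fun p => hc p.1 p.2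
    have := DFunLike.congr_fun (eval_comp_xi (s := s) hact (fun p => c p.1 p.2) hψ') x
    rw [NonUnitalAlgHom.comp_apply] at this
    have h2 := hx ⟨fun p => c p.1 p.2, hψ'⟩
    rw [xiL_apply] at h2
    rw [this] at h2
    have hfun : (fun p : ℕ × (T → F) => p.2 • ψ p.1)
        = fun p : ℕ × (T → F) => p.2 • ∑ t ∈ s, c p.1 t := by
      funext p
      rw [hcsum p.1]
    rw [hfun]
    exact h2

lemma eval_embed_zero (φ : FreeNA F T →ₙₐ[F] A) :
    ∀ (w : FreeMagma (ℕ × T)) (p : ℕ × T), p ∈ mleaves w → φ (of F p) = 0 →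
      φ (embedMonomial F T w) = 0
  | .of a, p, hp, hz => by
      have : p = a := by simpa [mleaves] using hp
      rw [embed_of, ← this, hz]
  | .mul x y, p, hp, hz => by
      rw [FreeMagma.mul_eq, map_mul, map_mul]
      rcases Multiset.mem_add.mp hp with h | h
      · rw [eval_embed_zero φ x p h hz, zero_mul]
      · rw [eval_embed_zero φ y p h hz, mul_zero]

lemma embed_mem_IdGr {w : FreeMagma (ℕ × T)} {p : ℕ × T} (hp : p ∈ mleaves w)
    (hbot : comp p.2 = ⊥) : embedMonomial F T w ∈ IdGr F A T comp := by
  rw [mem_IdGr]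
  intro ψ
  refine eval_embed_zero _ w p hp ?_
  rw [lift_of_apply]
  have := ψ.2 p
  rwa [hbot, Submodule.mem_bot] at this

lemma IdGr_relabel (g : ℕ → ℕ) {x : FreeNA F T} (hx : x ∈ IdGr F A T comp) :
    relabelL F T g x ∈ IdGr F A T comp := by
  rw [mem_IdGr] at hx ⊢
  intro ψ
  have hcomp : (lift F (fun p : ℕ × T => ψ.1 p) : FreeNA F T →ₙₐ[F] A).comp
      (relabelHom F T g) = lift F (fun p : ℕ × T => ψ.1 (g p.1, p.2)) := by
    apply hom_ext
    rintro ⟨i, t⟩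
    simp [relabelHom, NonUnitalAlgHom.comp_apply]
  have := DFunLike.congr_fun hcomp x
  rw [NonUnitalAlgHom.comp_apply] at this
  rw [relabelL_apply, this]
  exact hx ⟨fun p => ψ.1 (g p.1, p.2), fun p => ψ.2 (g p.1, p.2)⟩

lemma IdGr_youngE {n : ℕ} (Tb : Fin n → ℕ × ℕ) {x : FreeNA F T} (hx : x ∈ IdGr F A T comp) :
    youngE F T Tb x ∈ IdGr F A T comp := by
  rw [youngE]
  simp only [LinearMap.sum_apply, LinearMap.smul_apply]
  exact Submodule.sum_mem _ fun π _ => Submodule.sum_mem _ fun σ _ =>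
    Submodule.smul_mem _ _ (IdGr_relabel _ hx)

end Aux2

end PIExp

namespace PIExp

open FreeNonUnitalNonAssocAlgebra

section Aux3

variable {F : Type} [Field F] {T : Type} [DecidableEq T] {s : Finset T}
variable {A : Type} [NonUnitalNonAssocRing A] [Module F A]
  [SMulCommClass F A A] [IsScalarTower F A A] [Module (T → F) A]
variable {comp : T → Submodule F A}

lemma xi_embed_delta : ∀ w : FreeMagma (ℕ × T), (∀ p ∈ mleaves w, p.2 ∈ s) →
    xiHom F T s (embedMonomial F (T → F)
      (FreeMagma.map (fun q : ℕ × T => (q.1, fun u => if u = q.2 then (1 : F) else 0)) w))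
      = embedMonomial F T w
  | .of a, h => by
      have ha : a.2 ∈ s := h a (by simp [mleaves])
      rw [FreeMagma.map_of, embed_of, xiHom_of, embed_of]
      simp only [ite_smul, one_smul, zero_smul]
      rw [Finset.sum_ite_eq' s a.2 (fun t => of F (a.1, t)), if_pos ha]
  | .mul x y, h => by
      rw [FreeMagma.mul_eq, map_mul, map_mul, map_mul, map_mul,
        xi_embed_delta x (fun p hp => h p (Multiset.mem_add.mpr (Or.inl hp))),
        xi_embed_delta y (fun p hp => h p (Multiset.mem_add.mpr (Or.inr hp)))]

lemma Wn_le_sup (hs : ∀ t, t ∉ s → comp t = ⊥) (n : ℕ) :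
    Wn F T n ≤ (Wn F (T → F) n).map (xiL F T s) ⊔ IdGr F A T comp := by
  rw [Wn, Submodule.span_le]
  rintro _ ⟨w, hw, rfl⟩
  by_cases hall : ∀ p ∈ mleaves w, p.2 ∈ s
  · refine Submodule.mem_sup_left ⟨embedMonomial F (T → F)
      (FreeMagma.map (fun q : ℕ × T => (q.1, fun u => if u = q.2 then (1 : F) else 0)) w),
      ?_, xi_embed_delta w hall⟩
    refine Submodule.subset_span ⟨_, ?_, rfl⟩
    rw [mleaves_map, Multiset.map_map]
    exact hw
  · push_neg at hall
    obtain ⟨p, hp, hps⟩ := hall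
    exact Submodule.mem_sup_right (embed_mem_IdGr hp (hs _ hps))

lemma key_finrank (hact : ∀ (h : T → F) (t : T), ∀ a ∈ comp t, h • a = h t • a)
    (htotal : (⨆ t, comp t) = ⊤) (hs : ∀ t, t ∉ s → comp t = ⊥)
    (PH : Submodule F (FreeNA F (T → F))) (PT : Submodule F (FreeNA F T))
    (h1 : PH.map (xiL F T s) ≤ PT)
    (h2 : PT ≤ PH.map (xiL F T s) ⊔ IdGr F A T comp) :
    Module.finrank F (PH.map (IdH F A (T → F)).mkQ)
      = Module.finrank F (PT.map (IdGr F A T comp).mkQ) := by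
  set q2 := (IdGr F A T comp).mkQ with hq2
  have hker : IdH F A (T → F) = LinearMap.ker (q2 ∘ₗ xiL F T s) := by
    rw [LinearMap.ker_comp, hq2, Submodule.ker_mkQ]
    exact IdH_eq_comap hact htotal hs
  set φ := (IdH F A (T → F)).liftQ (q2 ∘ₗ xiL F T s) hker.le with hφ
  have hinj : Function.Injective φ :=
    LinearMap.ker_eq_bot.mp (Submodule.ker_liftQ_eq_bot' _ _ hker)
  have hmap : (PH.map (IdH F A (T → F)).mkQ).map φ = PT.map q2 := by
    rw [← Submodule.map_comp, hφ, Submodule.liftQ_mkQ, Submodule.map_comp]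
    apply le_antisymm
    · exact Submodule.map_mono h1
    · have hbot : (IdGr F A T comp).map q2 = ⊥ := Submodule.mkQ_map_self _
      have := Submodule.map_mono (f := q2) h2
      rwa [Submodule.map_sup, hbot, sup_bot_eq] at this
  rw [← hmap]
  exact (Submodule.equivMapOfInjective φ hinj _).finrank_eq

end Aux3

end PIExp
/-- **Lemma (graded codimensions, cocharacters and colengths coincide with the `F^T` ones).**
For a grading with finite support, regarded as a generalized `F^T`-action:
`c_n^{T-gr}(A) = c_n^{F^T}(A)`; the `FS_n`-modules `W_n^{T-gr}/(W_n^{T-gr} ∩ Id^{T-gr}(A))` and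
`W_n^{F^T}/(W_n^{F^T} ∩ Id^{F^T}(A))` are isomorphic (expressed by an `S_n`-equivariant linear
map `ξ` mapping `W_n` into `W_n`, pulling back identities to identities, and surjective modulo
identities); and if `char F = 0` then `ℓ_n^{T-gr}(A) = ℓ_n^{F^T}(A)`. -/
theorem graded_invariants_eq_generalized_action_invariants
    (F T A : Type) [Field F] [DecidableEq T]
    [NonUnitalNonAssocRing A] [Module F A] [SMulCommClass F A A] [IsScalarTower F A A]
    [Module (T → F) A]
    (comp : T → Submodule F A)
    (hindep : iSupIndep comp) (htotal : (⨆ t, comp t) = ⊤)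
    (hmul : ∀ s t : T, ∃ r : T, ∀ a ∈ comp s, ∀ b ∈ comp t, a * b ∈ comp r)
    (hsupp : {t : T | comp t ≠ ⊥}.Finite)
    (hact : ∀ (h : T → F) (t : T), ∀ a ∈ comp t, h • a = h t • a) (n : ℕ) :
    PIExp.codim F T (PIExp.IdGr F A T comp) n =
      PIExp.codim F (T → F) (PIExp.IdH F A (T → F)) n ∧
    (∃ ξ : PIExp.FreeNA F (T → F) →ₗ[F] PIExp.FreeNA F T,
      (∀ g : ℕ → ℕ, PIExp.relabelL F T g ∘ₗ ξ = ξ ∘ₗ PIExp.relabelL F (T → F) g) ∧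
      (PIExp.Wn F (T → F) n).map ξ ≤ PIExp.Wn F T n ∧
      (∀ f ∈ PIExp.Wn F (T → F) n,
        (f ∈ PIExp.IdH F A (T → F) ↔ ξ f ∈ PIExp.IdGr F A T comp)) ∧
      (∀ g ∈ PIExp.Wn F T n,
        ∃ f ∈ PIExp.Wn F (T → F) n, g - ξ f ∈ PIExp.IdGr F A T comp)) ∧
    (CharZero F →
      PIExp.colength F T (PIExp.IdGr F A T comp) n =
        PIExp.colength F (T → F) (PIExp.IdH F A (T → F)) n) := by
  classical
  set s : Finset T := hsupp.toFinset with hsdef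
  have hsbot : ∀ t, t ∉ s → comp t = ⊥ := by
    intro t ht
    by_contra hc
    exact ht (hsupp.mem_toFinset.mpr hc)
  refine ⟨?_, ⟨PIExp.xiL F T s, fun g => PIExp.relabelL_comm_xiL g,
      PIExp.map_xiL_Wn_le n, ?_, ?_⟩, ?_⟩
  · simp only [PIExp.codim]
    exact (PIExp.key_finrank hact htotal hsbot (PIExp.Wn F (T → F) n) (PIExp.Wn F T n)
      (PIExp.map_xiL_Wn_le n) (PIExp.Wn_le_sup hsbot n)).symm
  · intro f _
    rw [PIExp.IdH_eq_comap hact htotal hsbot]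
    exact Submodule.mem_comap
  · intro g hg
    have hmem := PIExp.Wn_le_sup (comp := comp) hsbot n hg
    rw [Submodule.mem_sup] at hmem
    obtain ⟨y, ⟨f, hf, rfl⟩, z, hz, hyz⟩ := hmem
    exact ⟨f, hf, by rw [← hyz]; simpa using hz⟩
  · intro _
    simp only [PIExp.colength]
    refine Finset.sum_congr rfl fun p _ => ?_
    have hYc : PIExp.xiL F T s ∘ₗ PIExp.youngE F (T → F) (PIExp.canonT p)
        = PIExp.youngE F T (PIExp.canonT p) ∘ₗ PIExp.xiL F T s :=
      LinearMap.ext fun x => (PIExp.youngE_comm_xiL (PIExp.canonT p) x).symm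
    have h1 : ((PIExp.Wn F (T → F) n).map
          (PIExp.youngE F (T → F) (PIExp.canonT p))).map (PIExp.xiL F T s)
        ≤ (PIExp.Wn F T n).map (PIExp.youngE F T (PIExp.canonT p)) := by
      rw [← Submodule.map_comp, hYc, Submodule.map_comp]
      exact Submodule.map_mono (PIExp.map_xiL_Wn_le n)
    have h2 : (PIExp.Wn F T n).map (PIExp.youngE F T (PIExp.canonT p))
        ≤ ((PIExp.Wn F (T → F) n).map
            (PIExp.youngE F (T → F) (PIExp.canonT p))).map (PIExp.xiL F T s)
          ⊔ PIExp.IdGr F A T comp := by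
      have hmono := Submodule.map_mono (f := PIExp.youngE F T (PIExp.canonT p))
        (PIExp.Wn_le_sup (comp := comp) hsbot n)
      rw [Submodule.map_sup] at hmono
      refine hmono.trans (sup_le_sup ?_ ?_)
      · rw [← Submodule.map_comp, ← hYc, Submodule.map_comp]
      · rw [Submodule.map_le_iff_le_comap]
        intro x hx
        exact PIExp.IdGr_youngE _ hx
    simp only [PIExp.mult]
    exact (PIExp.key_finrank hact htotal hsbot _ _ h1 h2).symm
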